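/- Let X be a k-regular graph on v vertices with least adjacency eigenvalue τ < 0, and let α(X) be the maximum size of a coclique (independent set) in X. Then α(X) ≤ v(−τ)/(k − τ). -/

import Mathlib

open Matrix

open Finset in
lemma rayleigh_lower {n : Type*} [Fintype n] [DecidableEq n] {A : Matrix n n ℝ}
    (hA : A.IsHermitian) {τ : ℝ} (h : ∀ i, τ ≤ hA.eigenvalues i) (x : n → ℝ) :
    τ * (x ⬝ᵥ x) ≤ x ⬝ᵥ A *ᵥ x := by
  set U : Matrix n n ℝ := (hA.eigenvectorUnitary : Matrix n n ℝ) with hUdef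
  have hstar : star U = Uᵀ := by
    rw [star_eq_conjTranspose, conjTranspose_eq_transpose_of_trivial]
  have hU1 : U * star U = 1 := mem_unitaryGroup_iff.mp hA.eigenvectorUnitary.2
  set y : n → ℝ := star U *ᵥ x with hy
  have hyy : y ⬝ᵥ y = x ⬝ᵥ x := by
    have h1 : y = x ᵥ* U := by rw [hy, hstar, mulVec_transpose]
    nth_rewrite 1 [h1]
    rw [hy, dotProduct_mulVec, vecMul_vecMul, hU1, vecMul_one]
  have hQ : x ⬝ᵥ A *ᵥ x = ∑ i, hA.eigenvalues i * (y i)^2 := by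
    conv_lhs => rw [hA.spectral_theorem, Unitary.conjStarAlgAut_apply]
    rw [← hUdef, ← mulVec_mulVec, ← mulVec_mulVec, dotProduct_mulVec, ← mulVec_transpose,
      ← hstar, ← hy]
    have : y ⬝ᵥ (diagonal (RCLike.ofReal ∘ hA.eigenvalues) *ᵥ y)
        = ∑ i, hA.eigenvalues i * (y i)^2 := by
      simp [dotProduct, mulVec_diagonal]
      exact Finset.sum_congr rfl fun i _ => by ring
    exact this
  rw [hQ, ← hyy]
  have : τ * (y ⬝ᵥ y) = ∑ i, τ * (y i)^2 := by
    simp [dotProduct, Finset.mul_sum]; ring_nf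
  rw [this]
  exact Finset.sum_le_sum fun i _ => mul_le_mul_of_nonneg_right (h i) (sq_nonneg _)


/-- Hoffman ratio bound: in a `k`-regular graph on `v` vertices with least adjacency
eigenvalue `τ < 0`, any coclique has size at most `v·(−τ)/(k − τ)`. -/
theorem hoffman_bound {V : Type*} [Fintype V] [DecidableEq V]
    (G : SimpleGraph V) [DecidableRel G.Adj]
    (k : ℕ) (hk : 0 < k) (hreg : G.IsRegularOfDegree k)
    (τ : ℝ) (hτmem : τ ∈ spectrum ℝ (G.adjMatrix ℝ))
    (hτmin : ∀ x ∈ spectrum ℝ (G.adjMatrix ℝ), τ ≤ x) (hτneg : τ < 0)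
    (S : Finset V) (hS : ∀ x ∈ S, ∀ y ∈ S, x ≠ y → ¬ G.Adj x y) :
    (S.card : ℝ) ≤ (Fintype.card V : ℝ) * (-τ) / ((k : ℝ) - τ) := by
  classical
  have hherm : (G.adjMatrix ℝ).IsHermitian := by
    rw [Matrix.IsHermitian, conjTranspose_eq_transpose_of_trivial]
    exact G.isSymm_adjMatrix
  have hτle : ∀ x : V → ℝ, τ * (x ⬝ᵥ x) ≤ x ⬝ᵥ (G.adjMatrix ℝ) *ᵥ x :=
    fun x => rayleigh_lower hherm
      (fun i => hτmin _ (hherm.eigenvalues_mem_spectrum_real i)) x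
  have hkτ : (0:ℝ) < (k:ℝ) - τ := by
    have : (1:ℝ) ≤ (k:ℝ) := by exact_mod_cast hk
    linarith
  by_cases hs0 : S.card = 0
  · rw [hs0]
    push_cast
    apply div_nonneg _ hkτ.le
    have : (0:ℝ) ≤ -τ := by linarith
    positivity
  set n : ℝ := (Fintype.card V : ℝ) with hndef
  set s : ℝ := (S.card : ℝ) with hsdef
  have hs : 0 < s := by
    rw [hsdef]; exact_mod_cast Nat.pos_of_ne_zero hs0
  have hn : 0 < n := by
    rw [hndef]
    have h1 : S.card ≤ Fintype.card V := by
      simpa using Finset.card_le_univ S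
    have := Nat.pos_of_ne_zero hs0
    exact_mod_cast lt_of_lt_of_le this h1
  set c : ℝ := s / n with hcdef
  have hcn : c * n = s := div_mul_cancel₀ s hn.ne'
  set g : V → ℝ := fun i => if i ∈ S then 1 else 0 with hgdef
  set f : V → ℝ := fun i => g i - c with hfdef
  have hg : ∑ i, g i = s := by
    simp [hgdef, Finset.sum_ite_mem, hsdef]
  have hrow : ∀ i, ∑ j, (G.adjMatrix ℝ) i j = (k:ℝ) := by
    intro i
    have h1 : ∑ j, (G.adjMatrix ℝ) i j = ((Finset.univ.filter (G.Adj i)).card : ℝ) := by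
      simp [SimpleGraph.adjMatrix_apply, Finset.sum_boole]
    rw [h1, ← SimpleGraph.neighborFinset_eq_filter,
      SimpleGraph.card_neighborFinset_eq_degree, hreg i]
  have hcol : ∀ j, ∑ i, (G.adjMatrix ℝ) i j = (k:ℝ) := by
    intro j
    have h1 : ∑ i, (G.adjMatrix ℝ) i j = ∑ i, (G.adjMatrix ℝ) j i :=
      Finset.sum_congr rfl fun i _ => by
        simp [SimpleGraph.adjMatrix_apply, G.adj_comm]
    rw [h1, hrow j]
  have S1 : ∑ i, g i * ∑ j, (G.adjMatrix ℝ) i j * g j = 0 := by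
    refine Finset.sum_eq_zero fun i _ => ?_
    by_cases hi : i ∈ S
    swap
    · simp [hgdef, hi]
    rw [mul_eq_zero]; right
    refine Finset.sum_eq_zero fun j _ => ?_
    by_cases hj : j ∈ S
    · have hnadj : ¬ G.Adj i j := by
        by_cases hij : i = j
        · subst hij; exact G.irrefl
        · exact hS i hi j hj hij
      simp [SimpleGraph.adjMatrix_apply, hnadj]
    · simp [hgdef, hj]
  have S2 : ∑ i, ∑ j, (G.adjMatrix ℝ) i j * g j = (k:ℝ) * s := by
    rw [Finset.sum_comm]
    calc ∑ j, ∑ i, (G.adjMatrix ℝ) i j * g j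
        = ∑ j, (∑ i, (G.adjMatrix ℝ) i j) * g j :=
          Finset.sum_congr rfl fun j _ => by rw [Finset.sum_mul]
      _ = ∑ j, (k:ℝ) * g j := Finset.sum_congr rfl fun j _ => by rw [hcol j]
      _ = (k:ℝ) * s := by rw [← Finset.mul_sum, hg]
  have S3 : ∑ i, g i * ∑ j, (G.adjMatrix ℝ) i j = (k:ℝ) * s := by
    calc ∑ i, g i * ∑ j, (G.adjMatrix ℝ) i j
        = ∑ i, g i * (k:ℝ) := Finset.sum_congr rfl fun i _ => by rw [hrow i]
      _ = (k:ℝ) * s := by rw [← Finset.sum_mul, hg, mul_comm]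
  have S4 : ∑ i, ∑ j, (G.adjMatrix ℝ) i j = (k:ℝ) * n := by
    calc ∑ i, ∑ j, (G.adjMatrix ℝ) i j = ∑ _i : V, (k:ℝ) :=
          Finset.sum_congr rfl fun i _ => hrow i
      _ = (k:ℝ) * n := by
          rw [Finset.sum_const, Finset.card_univ, nsmul_eq_mul, hndef, mul_comm]
  have hQ : f ⬝ᵥ (G.adjMatrix ℝ) *ᵥ f = -(c*(k:ℝ)*s) := by
    have e1 : f ⬝ᵥ (G.adjMatrix ℝ) *ᵥ f = ∑ i, ∑ j, f i * ((G.adjMatrix ℝ) i j * f j) := by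
      simp [dotProduct, mulVec, Finset.mul_sum]
    have e2 : ∀ i j, f i * ((G.adjMatrix ℝ) i j * f j)
        = g i * ((G.adjMatrix ℝ) i j * g j) - c * ((G.adjMatrix ℝ) i j * g j)
          - c * (g i * (G.adjMatrix ℝ) i j) + c^2 * (G.adjMatrix ℝ) i j := fun i j => by
      simp only [hfdef]; ring
    rw [e1]
    simp only [e2, Finset.sum_add_distrib, Finset.sum_sub_distrib, ← Finset.mul_sum]
    rw [S1, S2, S3, S4]
    linear_combination ((k:ℝ)*c) * hcn
  have hff : f ⬝ᵥ f = s - c*s := by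
    have e1 : f ⬝ᵥ f = ∑ i, (g i - 2*c*(g i) + c^2) :=
      Finset.sum_congr rfl fun i _ => by
        by_cases h : i ∈ S <;> simp [hfdef, hgdef, h] <;> ring
    rw [e1]
    rw [Finset.sum_add_distrib, Finset.sum_sub_distrib, ← Finset.mul_sum, hg,
      Finset.sum_const, Finset.card_univ, nsmul_eq_mul, ← hndef]
    linear_combination c * hcn
  have key := hτle f
  rw [hQ, hff] at key
  have h3 : c * ((k:ℝ) - τ) ≤ -τ := by nlinarith [key, hs]
  rw [le_div_iff₀ hkτ]
  have h4 : s * ((k:ℝ) - τ) = n * (c * ((k:ℝ) - τ)) := by rw [← hcn]; ring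
  rw [h4]
  exact mul_le_mul_of_nonneg_left h3 hn.le
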